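/- Let H be an inner product space over ℂ, n ≥ 1, x₁,…,xₙ, y₁,…,yₙ ∈ H, p a probability vector, and a, b ∈ H, r, s ≥ 0. If ‖xᵢ − a‖ ≤ r and ‖yᵢ − b‖ ≤ s for all i, then |∑ᵢ pᵢ⟨xᵢ, yᵢ⟩ − ⟨∑ᵢ pᵢ xᵢ, ∑ᵢ pᵢ yᵢ⟩| ≤ r·s. -/

import Mathlib

open scoped InnerProductSpace

open Finset in
private lemma gruss_center_sum {H : Type*} [NormedAddCommGroup H] [InnerProductSpace ℂ H]
    {n : ℕ} (p : Fin n → ℝ) (hsum : ∑ i, p i = 1) (w : Fin n → H) (a : H) :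
    (∑ i, (p i : ℂ) • w i) - a = ∑ i, (p i : ℂ) • (w i - a) := by
  have h1 : (∑ i, (p i : ℂ)) = 1 := by
    rw [← Complex.ofReal_sum, hsum, Complex.ofReal_one]
  simp only [smul_sub, Finset.sum_sub_distrib, ← Finset.sum_smul, h1, one_smul]

open Finset RCLike in
private lemma gruss_var_le {H : Type*} [NormedAddCommGroup H] [InnerProductSpace ℂ H]
    {n : ℕ} (p : Fin n → ℝ) (hp : ∀ i, 0 ≤ p i) (hsum : ∑ i, p i = 1)
    (w : Fin n → H) (a : H) (r : ℝ) (hr : 0 ≤ r) (hw : ∀ i, ‖w i - a‖ ≤ r) :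
    ∑ i, p i * ‖w i - (∑ j, (p j : ℂ) • w j)‖ ^ 2 ≤ r ^ 2 := by
  set z : H := ∑ j, (p j : ℂ) • w j with hz
  have hza : z - a = ∑ i, (p i : ℂ) • (w i - a) := gruss_center_sum p hsum w a
  have hexp : ∀ i, ‖w i - z‖ ^ 2
      = ‖w i - a‖ ^ 2 - 2 * Complex.re ⟪w i - a, z - a⟫_ℂ + ‖z - a‖ ^ 2 := by
    intro i
    have : w i - z = (w i - a) - (z - a) := by abel
    rw [this, @norm_sub_sq ℂ]
    rfl
  have hinner : ∑ i, p i * Complex.re ⟪w i - a, z - a⟫_ℂ = ‖z - a‖ ^ 2 := by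
    have : (⟪z - a, z - a⟫_ℂ) = ∑ i, (p i : ℂ) * ⟪w i - a, z - a⟫_ℂ := by
      nth_rewrite 1 [hza]
      rw [sum_inner]
      refine Finset.sum_congr rfl fun i _ => ?_
      rw [inner_smul_left, Complex.conj_ofReal]
    have h2 : Complex.re ⟪z - a, z - a⟫_ℂ = ‖z - a‖ ^ 2 := by
      rw [← @inner_self_eq_norm_sq ℂ]
      rfl
    rw [← h2, this, Complex.re_sum]
    refine Finset.sum_congr rfl fun i _ => ?_
    rw [Complex.mul_re, Complex.ofReal_re, Complex.ofReal_im]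
    ring
  have hsum2 : ∑ i, p i * ‖w i - z‖ ^ 2
      = (∑ i, p i * ‖w i - a‖ ^ 2) - ‖z - a‖ ^ 2 := by
    calc ∑ i, p i * ‖w i - z‖ ^ 2
        = ∑ i, (p i * ‖w i - a‖ ^ 2 - 2 * (p i * Complex.re ⟪w i - a, z - a⟫_ℂ)
            + p i * ‖z - a‖ ^ 2) := by
          refine Finset.sum_congr rfl fun i _ => ?_; rw [hexp i]; ring
      _ = (∑ i, p i * ‖w i - a‖ ^ 2) - 2 * (∑ i, p i * Complex.re ⟪w i - a, z - a⟫_ℂ)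
            + (∑ i, p i) * ‖z - a‖ ^ 2 := by
          rw [Finset.sum_add_distrib, Finset.sum_sub_distrib, ← Finset.mul_sum,
            ← Finset.sum_mul]
      _ = (∑ i, p i * ‖w i - a‖ ^ 2) - ‖z - a‖ ^ 2 := by
          rw [hinner, hsum]; ring
  have hb : ∑ i, p i * ‖w i - a‖ ^ 2 ≤ r ^ 2 := by
    calc ∑ i, p i * ‖w i - a‖ ^ 2 ≤ ∑ i, p i * r ^ 2 := by
          refine Finset.sum_le_sum fun i _ => ?_
          exact mul_le_mul_of_nonneg_left
            (pow_le_pow_left₀ (norm_nonneg _) (hw i) 2) (hp i)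
      _ = r ^ 2 := by rw [← Finset.sum_mul, hsum, one_mul]
  nlinarith [sq_nonneg ‖z - a‖]

theorem gruss_inequality {H : Type*} [NormedAddCommGroup H] [InnerProductSpace ℂ H]
    (n : ℕ) (hn : 1 ≤ n) (x y : Fin n → H) (p : Fin n → ℝ)
    (hp : ∀ i, 0 ≤ p i) (hsum : ∑ i, p i = 1) (a b : H) (r s : ℝ)
    (hr : 0 ≤ r) (hs : 0 ≤ s)
    (hx : ∀ i, ‖x i - a‖ ≤ r) (hy : ∀ i, ‖y i - b‖ ≤ s) :
    ‖∑ i, (p i : ℂ) * ⟪x i, y i⟫_ℂ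
        - ⟪∑ i, (p i : ℂ) • x i, ∑ i, (p i : ℂ) • y i⟫_ℂ‖ ≤ r * s := by
  set X : H := ∑ i, (p i : ℂ) • x i with hX
  set Y : H := ∑ i, (p i : ℂ) • y i with hY
  have h1C : (∑ i, (p i : ℂ)) = 1 := by
    rw [← Complex.ofReal_sum, hsum, Complex.ofReal_one]
  -- key identity
  have hXY : ∑ i, (p i : ℂ) * ⟪x i, Y⟫_ℂ = ⟪X, Y⟫_ℂ := by
    rw [hX, sum_inner]
    refine Finset.sum_congr rfl fun i _ => ?_
    rw [inner_smul_left, Complex.conj_ofReal]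
  have hXY' : ∑ i, (p i : ℂ) * ⟪X, y i⟫_ℂ = ⟪X, Y⟫_ℂ := by
    rw [hY, inner_sum]
    refine Finset.sum_congr rfl fun i _ => ?_
    rw [inner_smul_right]
  have key : (∑ i, (p i : ℂ) * ⟪x i, y i⟫_ℂ) - ⟪X, Y⟫_ℂ
      = ∑ i, (p i : ℂ) * ⟪x i - X, y i - Y⟫_ℂ := by
    have : ∀ i : Fin n, (p i : ℂ) * ⟪x i - X, y i - Y⟫_ℂ
        = (p i : ℂ) * ⟪x i, y i⟫_ℂ - (p i : ℂ) * ⟪x i, Y⟫_ℂ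
          - (p i : ℂ) * ⟪X, y i⟫_ℂ + (p i : ℂ) * ⟪X, Y⟫_ℂ := by
      intro i
      rw [inner_sub_left, inner_sub_right, inner_sub_right]
      ring
    rw [Finset.sum_congr rfl fun i _ => this i]
    simp only [Finset.sum_add_distrib, Finset.sum_sub_distrib, hXY, hXY',
      ← Finset.sum_mul, h1C, one_mul]
    ring
  rw [key]
  -- bound by sum of p i * norms
  have step2 : ‖∑ i, (p i : ℂ) * ⟪x i - X, y i - Y⟫_ℂ‖
      ≤ ∑ i, p i * (‖x i - X‖ * ‖y i - Y‖) := by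
    refine (norm_sum_le _ _).trans ?_
    refine Finset.sum_le_sum fun i _ => ?_
    rw [norm_mul, Complex.norm_real, Real.norm_of_nonneg (hp i)]
    have hni := norm_inner_le_norm (𝕜 := ℂ) (x i - X) (y i - Y)
    exact mul_le_mul_of_nonneg_left hni (hp i)
  refine step2.trans ?_
  -- Cauchy-Schwarz
  have hCS : (∑ i, p i * (‖x i - X‖ * ‖y i - Y‖)) ^ 2
      ≤ (∑ i, p i * ‖x i - X‖ ^ 2) * ∑ i, p i * ‖y i - Y‖ ^ 2 := by
    refine Finset.sum_sq_le_sum_mul_sum_of_sq_eq_mul _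
      (fun i _ => mul_nonneg (hp i) (sq_nonneg _))
      (fun i _ => mul_nonneg (hp i) (sq_nonneg _)) (fun i _ => ?_)
    ring
  have hvx := gruss_var_le p hp hsum x a r hr hx
  have hvy := gruss_var_le p hp hsum y b s hs hy
  have hnn : 0 ≤ ∑ i, p i * (‖x i - X‖ * ‖y i - Y‖) :=
    Finset.sum_nonneg fun i _ => mul_nonneg (hp i)
      (mul_nonneg (norm_nonneg _) (norm_nonneg _))
  have hvx0 : 0 ≤ ∑ i, p i * ‖x i - X‖ ^ 2 :=
    Finset.sum_nonneg fun i _ => mul_nonneg (hp i) (sq_nonneg _)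
  nlinarith [mul_nonneg hr hs]
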